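/- Symmetric-gradient identity underlying Korn's inequality on the channel: Let u : ℝ³ → ℝ³ be twice continuously differentiable on a neighborhood of [0,1]×ℝ², 1-periodic in the coordinates x₂ and x₃, and satisfy u₁(0,x₂,x₃) = u₁(1,x₂,x₃) = 0 for all x₂,x₃. Then (1/2) ∫_{(0,1)³} |∇u(x) + ∇u(x)ᵀ|² dx = ∫_{(0,1)³} ( |∇u(x)|² + ((div u)(x))² ) dx, where |·| denotes the Frobenius norm. -/

import Mathlib

open MeasureTheory

/-- Standard basis vectors of `ℝ × ℝ × ℝ`. -/
noncomputable def e3 : Fin 3 → ℝ × ℝ × ℝ := ![(1, 0, 0), (0, 1, 0), (0, 0, 1)]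

/-- The `j`-th partial derivative of a scalar function on `ℝ³`. -/
noncomputable def pd (j : Fin 3) (f : ℝ × ℝ × ℝ → ℝ) (x : ℝ × ℝ × ℝ) : ℝ :=
  fderiv ℝ f x (e3 j)

/-- The Jacobian matrix `(∇u)ᵢⱼ = ∂ⱼuᵢ` of a vector field `u = (u₀,u₁,u₂)`. -/
noncomputable def jac (u : Fin 3 → ℝ × ℝ × ℝ → ℝ) (x : ℝ × ℝ × ℝ) :
    Matrix (Fin 3) (Fin 3) ℝ :=
  Matrix.of fun i j => pd j (u i) x

/-- The divergence `div u = ∂₁u₁ + ∂₂u₂ + ∂₃u₃`. -/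
noncomputable def divg (u : Fin 3 → ℝ × ℝ × ℝ → ℝ) (x : ℝ × ℝ × ℝ) : ℝ :=
  ∑ i, pd i (u i) x

/-- The squared Frobenius norm of a 3×3 real matrix. -/
def frobSq (M : Matrix (Fin 3) (Fin 3) ℝ) : ℝ := ∑ i, ∑ j, (M i j) ^ 2

/-- The open unit cube `(0,1)³`, modelling the channel `(0,1)×𝕋²`. -/
def cube : Set (ℝ × ℝ × ℝ) :=
  Set.Ioo (0 : ℝ) 1 ×ˢ (Set.Ioo (0 : ℝ) 1 ×ˢ Set.Ioo (0 : ℝ) 1)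

/-- The closed strip `[0,1] × ℝ²`. -/
def strip : Set (ℝ × ℝ × ℝ) := Set.Icc (0 : ℝ) 1 ×ˢ (Set.univ : Set (ℝ × ℝ))

section Helpers
variable {U : Set (ℝ × ℝ × ℝ)}

lemma cube_subset_strip : cube ⊆ strip := by
  rintro ⟨a, b, c⟩ ⟨ha, hb, hc⟩
  exact ⟨⟨ha.1.le, ha.2.le⟩, trivial⟩

lemma K_compact : IsCompact (Set.Icc ((0:ℝ),(0:ℝ),(0:ℝ)) (1,1,1)) := isCompact_Icc

lemma K_subset_strip : Set.Icc ((0:ℝ),(0:ℝ),(0:ℝ)) ((1:ℝ),(1:ℝ),(1:ℝ)) ⊆ strip := by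
  rintro ⟨a, b, c⟩ ⟨h1, h2⟩
  exact ⟨⟨h1.1, h2.1⟩, trivial⟩

lemma cube_subset_K : cube ⊆ Set.Icc ((0:ℝ),(0:ℝ),(0:ℝ)) ((1:ℝ),(1:ℝ),(1:ℝ)) := by
  rintro ⟨a, b, c⟩ ⟨ha, hb, hc⟩
  exact ⟨⟨ha.1.le, hb.1.le, hc.1.le⟩, ⟨ha.2.le, hb.2.le, hc.2.le⟩⟩

lemma intgOn (hUs : strip ⊆ U) {F : ℝ × ℝ × ℝ → ℝ} (hc : ContinuousOn F U) : IntegrableOn F cube := by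
  apply IntegrableOn.mono_set _ (cube_subset_K)
  exact (hc.mono (fun x hx => hUs (K_subset_strip hx))).integrableOn_compact K_compact

lemma pd_contOn (hU : IsOpen U) {f : ℝ × ℝ × ℝ → ℝ} (hf : ContDiffOn ℝ 1 f U) (j : Fin 3) :
    ContinuousOn (pd j f) U :=
  (hf.continuousOn_fderiv_of_isOpen hU le_rfl).clm_apply continuousOn_const

lemma pd_contDiffOn (hU : IsOpen U) {f : ℝ × ℝ × ℝ → ℝ} (hf : ContDiffOn ℝ 2 f U) (j : Fin 3) :
    ContDiffOn ℝ 1 (pd j f) U :=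
  (hf.fderiv_of_isOpen hU (by norm_num)).clm_apply contDiffOn_const

end Helpers

section Slice
variable {U : Set (ℝ × ℝ × ℝ)}

lemma hasDerivAt_slice0 {f : ℝ × ℝ × ℝ → ℝ} {t : ℝ} {q : ℝ × ℝ}
    (hd : DifferentiableAt ℝ f (t, q)) :
    HasDerivAt (fun s => f (s, q)) (pd 0 f (t, q)) t := by
  have hc : HasDerivAt (fun s : ℝ => (s, q)) ((1 : ℝ), (0 : ℝ × ℝ)) t :=
    (hasDerivAt_id t).prodMk (hasDerivAt_const t q)
  have := hd.hasFDerivAt.comp_hasDerivAt t hc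
  simpa [pd, e3, Function.comp_def, ← Prod.mk_zero_zero] using this

lemma hasDerivAt_slice1 {f : ℝ × ℝ × ℝ → ℝ} {a s : ℝ} {c : ℝ}
    (hd : DifferentiableAt ℝ f (a, s, c)) :
    HasDerivAt (fun y => f (a, y, c)) (pd 1 f (a, s, c)) s := by
  have hc : HasDerivAt (fun y : ℝ => ((a, y, c) : ℝ × ℝ × ℝ)) ((0 : ℝ), (1 : ℝ), (0 : ℝ)) s :=
    (hasDerivAt_const s a).prodMk ((hasDerivAt_id s).prodMk (hasDerivAt_const s c))
  have := hd.hasFDerivAt.comp_hasDerivAt s hc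
  simpa [pd, e3, Function.comp_def] using this

lemma hasDerivAt_slice2 {f : ℝ × ℝ × ℝ → ℝ} {a b z : ℝ}
    (hd : DifferentiableAt ℝ f (a, b, z)) :
    HasDerivAt (fun w => f (a, b, w)) (pd 2 f (a, b, z)) z := by
  have hc : HasDerivAt (fun w : ℝ => ((a, b, w) : ℝ × ℝ × ℝ)) ((0 : ℝ), (0 : ℝ), (1 : ℝ)) z :=
    (hasDerivAt_const z a).prodMk ((hasDerivAt_const z b).prodMk (hasDerivAt_id z))
  have := hd.hasFDerivAt.comp_hasDerivAt z hc
  simpa [pd, e3, Function.comp_def] using this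

lemma ftc01 {g g' : ℝ → ℝ} (hd : ∀ t ∈ Set.Icc (0:ℝ) 1, HasDerivAt g (g' t) t)
    (hc : ContinuousOn g' (Set.Icc (0:ℝ) 1)) :
    ∫ t in Set.Ioo (0:ℝ) 1, g' t = g 1 - g 0 := by
  rw [← integral_Ioc_eq_integral_Ioo, ← intervalIntegral.integral_of_le (by norm_num : (0:ℝ) ≤ 1)]
  exact intervalIntegral.integral_eq_sub_of_hasDerivAt
    (fun t ht => hd t (by simpa [Set.uIcc_of_le] using ht))
    (hc.intervalIntegrable_of_Icc (by norm_num))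

end Slice

section Div
variable {U : Set (ℝ × ℝ × ℝ)}

lemma mem_U_of_Icc (hUs : strip ⊆ U) {t : ℝ} (ht : t ∈ Set.Icc (0:ℝ) 1) (q : ℝ × ℝ) :
    (t, q) ∈ U := hUs ⟨ht, trivial⟩

lemma diffAt_of_C1 (hU : IsOpen U) {f : ℝ × ℝ × ℝ → ℝ} (hf : ContDiffOn ℝ 1 f U)
    {x : ℝ × ℝ × ℝ} (hx : x ∈ U) : DifferentiableAt ℝ f x :=
  (hf.differentiableOn one_ne_zero).differentiableAt (hU.mem_nhds hx)

/-- Fubini: reduce cube integral to (fiber, base) iterated form. -/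
lemma cube_int_eq_symm {F : ℝ × ℝ × ℝ → ℝ} (hInt : IntegrableOn F cube) :
    ∫ x in cube, F x
      = ∫ q in (Set.Ioo (0:ℝ) 1 ×ˢ Set.Ioo (0:ℝ) 1), ∫ t in Set.Ioo (0:ℝ) 1, F (t, q) := by
  have hInt' : Integrable F (((volume : Measure ℝ).restrict (Set.Ioo (0:ℝ) 1)).prod
      ((volume : Measure (ℝ × ℝ)).restrict (Set.Ioo (0:ℝ) 1 ×ˢ Set.Ioo (0:ℝ) 1))) := by
    rw [Measure.prod_restrict, ← Measure.volume_eq_prod ℝ (ℝ × ℝ)]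
    exact hInt
  calc ∫ x in cube, F x
      = ∫ x, F x ∂(((volume : Measure ℝ).restrict (Set.Ioo (0:ℝ) 1)).prod
          ((volume : Measure (ℝ × ℝ)).restrict (Set.Ioo (0:ℝ) 1 ×ˢ Set.Ioo (0:ℝ) 1))) := by
        rw [Measure.prod_restrict, ← Measure.volume_eq_prod ℝ (ℝ × ℝ), cube]
    _ = _ := integral_prod_symm _ hInt'

lemma cube_int_eq {F : ℝ × ℝ × ℝ → ℝ} (hInt : IntegrableOn F cube) :
    ∫ x in cube, F x
      = ∫ t in Set.Ioo (0:ℝ) 1, ∫ q in (Set.Ioo (0:ℝ) 1 ×ˢ Set.Ioo (0:ℝ) 1), F (t, q) := by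
  have hInt' : IntegrableOn F ((Set.Ioo (0:ℝ) 1) ×ˢ (Set.Ioo (0:ℝ) 1 ×ˢ Set.Ioo (0:ℝ) 1))
      (((volume : Measure ℝ)).prod (volume : Measure (ℝ × ℝ))) := by
    rw [← Measure.volume_eq_prod ℝ (ℝ × ℝ)]
    exact hInt
  calc ∫ x in cube, F x
      = ∫ x in ((Set.Ioo (0:ℝ) 1) ×ˢ (Set.Ioo (0:ℝ) 1 ×ˢ Set.Ioo (0:ℝ) 1)), F x
          ∂(((volume : Measure ℝ)).prod (volume : Measure (ℝ × ℝ))) := by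
        rw [← Measure.volume_eq_prod ℝ (ℝ × ℝ), cube]
    _ = _ := setIntegral_prod _ hInt'

/-- Same splitting one level down, for `ℝ × ℝ`. -/
lemma sq_int_eq_symm {F : ℝ × ℝ → ℝ}
    (hInt : IntegrableOn F (Set.Ioo (0:ℝ) 1 ×ˢ Set.Ioo (0:ℝ) 1)) :
    ∫ q in (Set.Ioo (0:ℝ) 1 ×ˢ Set.Ioo (0:ℝ) 1), F q
      = ∫ z in Set.Ioo (0:ℝ) 1, ∫ y in Set.Ioo (0:ℝ) 1, F (y, z) := by
  have hInt' : Integrable F (((volume : Measure ℝ).restrict (Set.Ioo (0:ℝ) 1)).prod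
      ((volume : Measure ℝ).restrict (Set.Ioo (0:ℝ) 1))) := by
    rw [Measure.prod_restrict, ← Measure.volume_eq_prod ℝ ℝ]
    exact hInt
  calc ∫ q in (Set.Ioo (0:ℝ) 1 ×ˢ Set.Ioo (0:ℝ) 1), F q
      = ∫ q, F q ∂(((volume : Measure ℝ).restrict (Set.Ioo (0:ℝ) 1)).prod
          ((volume : Measure ℝ).restrict (Set.Ioo (0:ℝ) 1))) := by
        rw [Measure.prod_restrict, ← Measure.volume_eq_prod ℝ ℝ]
    _ = _ := integral_prod_symm _ hInt'

lemma sq_int_eq {F : ℝ × ℝ → ℝ}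
    (hInt : IntegrableOn F (Set.Ioo (0:ℝ) 1 ×ˢ Set.Ioo (0:ℝ) 1)) :
    ∫ q in (Set.Ioo (0:ℝ) 1 ×ˢ Set.Ioo (0:ℝ) 1), F q
      = ∫ y in Set.Ioo (0:ℝ) 1, ∫ z in Set.Ioo (0:ℝ) 1, F (y, z) := by
  have hInt' : IntegrableOn F ((Set.Ioo (0:ℝ) 1) ×ˢ (Set.Ioo (0:ℝ) 1))
      (((volume : Measure ℝ)).prod (volume : Measure ℝ)) := by
    rw [← Measure.volume_eq_prod ℝ ℝ]
    exact hInt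
  calc ∫ q in (Set.Ioo (0:ℝ) 1 ×ˢ Set.Ioo (0:ℝ) 1), F q
      = ∫ q in ((Set.Ioo (0:ℝ) 1) ×ˢ (Set.Ioo (0:ℝ) 1)), F q
          ∂(((volume : Measure ℝ)).prod (volume : Measure ℝ)) := by
        rw [← Measure.volume_eq_prod ℝ ℝ]
    _ = _ := setIntegral_prod _ hInt'

/-- Divergence in the first (normal) direction: zero boundary values. -/
lemma intA (hU : IsOpen U) (hUs : strip ⊆ U) {f : ℝ × ℝ × ℝ → ℝ}
    (hf : ContDiffOn ℝ 1 f U)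
    (h0 : ∀ y z : ℝ, f (0, y, z) = 0) (h1 : ∀ y z : ℝ, f (1, y, z) = 0) :
    ∫ x in cube, pd 0 f x = 0 := by
  have hInt : IntegrableOn (pd 0 f) cube := intgOn hUs (pd_contOn hU hf 0)
  rw [cube_int_eq_symm hInt]
  have inner : ∀ q : ℝ × ℝ, ∫ t in Set.Ioo (0:ℝ) 1, pd 0 f (t, q) = 0 := by
    intro q
    have : ∫ t in Set.Ioo (0:ℝ) 1, pd 0 f (t, q) = f (1, q) - f (0, q) := by
      apply ftc01 (g := fun t => f (t, q))
      · intro t ht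
        exact hasDerivAt_slice0 (diffAt_of_C1 hU hf (mem_U_of_Icc hUs ht q))
      · exact (pd_contOn hU hf 0).comp
          (Continuous.continuousOn (by continuity))
          (fun t ht => mem_U_of_Icc hUs ht q)
    rw [this, show f (1, q) = 0 from h1 q.1 q.2, show f (0, q) = 0 from h0 q.1 q.2]
    ring
  simp only [inner, integral_zero]


lemma slice_intg (hUs : strip ⊆ U) {F : ℝ × ℝ × ℝ → ℝ} (hc : ContinuousOn F U)
    {a : ℝ} (ha : a ∈ Set.Icc (0:ℝ) 1) :
    IntegrableOn (fun q : ℝ × ℝ => F (a, q)) (Set.Ioo (0:ℝ) 1 ×ˢ Set.Ioo (0:ℝ) 1) := by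
  have hcont : ContinuousOn (fun q : ℝ × ℝ => F (a, q)) (Set.Icc ((0:ℝ),(0:ℝ)) (1,1)) :=
    hc.comp (Continuous.continuousOn (by continuity)) (fun q _ => hUs ⟨ha, trivial⟩)
  refine (hcont.integrableOn_compact isCompact_Icc).mono_set ?_
  rintro ⟨y, z⟩ ⟨hy, hz⟩
  exact ⟨⟨hy.1.le, hz.1.le⟩, ⟨hy.2.le, hz.2.le⟩⟩

/-- Divergence in the second direction: periodicity. -/
lemma intB (hU : IsOpen U) (hUs : strip ⊆ U) {f : ℝ × ℝ × ℝ → ℝ}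
    (hf : ContDiffOn ℝ 1 f U)
    (hp : ∀ a z : ℝ, a ∈ Set.Icc (0:ℝ) 1 → f (a, (1, z)) = f (a, (0, z))) :
    ∫ x in cube, pd 1 f x = 0 := by
  have hInt : IntegrableOn (pd 1 f) cube := intgOn hUs (pd_contOn hU hf 1)
  rw [cube_int_eq hInt]
  have inner : ∀ a ∈ Set.Ioo (0:ℝ) 1,
      (∫ q in (Set.Ioo (0:ℝ) 1 ×ˢ Set.Ioo (0:ℝ) 1), pd 1 f (a, q)) = 0 := by
    intro a ha
    have ha' : a ∈ Set.Icc (0:ℝ) 1 := ⟨ha.1.le, ha.2.le⟩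
    rw [sq_int_eq_symm (slice_intg hUs (pd_contOn hU hf 1) ha')]
    have inner2 : ∀ z : ℝ, ∫ y in Set.Ioo (0:ℝ) 1, pd 1 f (a, (y, z)) = 0 := by
      intro z
      have : ∫ y in Set.Ioo (0:ℝ) 1, pd 1 f (a, (y, z))
          = f (a, (1, z)) - f (a, (0, z)) := by
        apply ftc01 (g := fun y => f (a, (y, z)))
        · intro y hy
          exact hasDerivAt_slice1 (diffAt_of_C1 hU hf (hUs ⟨ha', trivial⟩))
        · exact (pd_contOn hU hf 1).comp
            (Continuous.continuousOn (by continuity))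
            (fun y hy => hUs ⟨ha', trivial⟩)
      rw [this, hp a z ha']
      ring
    simp only [inner2, integral_zero]
  calc ∫ a in Set.Ioo (0:ℝ) 1,
        ∫ q in (Set.Ioo (0:ℝ) 1 ×ˢ Set.Ioo (0:ℝ) 1), pd 1 f (a, q)
      = ∫ a in Set.Ioo (0:ℝ) 1, (0:ℝ) := setIntegral_congr_fun measurableSet_Ioo inner
    _ = 0 := integral_zero _ _

/-- Divergence in the third direction: periodicity. -/
lemma intC (hU : IsOpen U) (hUs : strip ⊆ U) {f : ℝ × ℝ × ℝ → ℝ}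
    (hf : ContDiffOn ℝ 1 f U)
    (hp : ∀ a y : ℝ, a ∈ Set.Icc (0:ℝ) 1 → f (a, (y, 1)) = f (a, (y, 0))) :
    ∫ x in cube, pd 2 f x = 0 := by
  have hInt : IntegrableOn (pd 2 f) cube := intgOn hUs (pd_contOn hU hf 2)
  rw [cube_int_eq hInt]
  have inner : ∀ a ∈ Set.Ioo (0:ℝ) 1,
      (∫ q in (Set.Ioo (0:ℝ) 1 ×ˢ Set.Ioo (0:ℝ) 1), pd 2 f (a, q)) = 0 := by
    intro a ha
    have ha' : a ∈ Set.Icc (0:ℝ) 1 := ⟨ha.1.le, ha.2.le⟩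
    rw [sq_int_eq (slice_intg hUs (pd_contOn hU hf 2) ha')]
    have inner2 : ∀ y : ℝ, ∫ z in Set.Ioo (0:ℝ) 1, pd 2 f (a, (y, z)) = 0 := by
      intro y
      have : ∫ z in Set.Ioo (0:ℝ) 1, pd 2 f (a, (y, z))
          = f (a, (y, 1)) - f (a, (y, 0)) := by
        apply ftc01 (g := fun z => f (a, (y, z)))
        · intro z hz
          exact hasDerivAt_slice2 (diffAt_of_C1 hU hf (hUs ⟨ha', trivial⟩))
        · exact (pd_contOn hU hf 2).comp
            (Continuous.continuousOn (by continuity))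
            (fun z hz => hUs ⟨ha', trivial⟩)
      rw [this, hp a y ha']
      ring
    simp only [inner2, integral_zero]
  calc ∫ a in Set.Ioo (0:ℝ) 1,
        ∫ q in (Set.Ioo (0:ℝ) 1 ×ˢ Set.Ioo (0:ℝ) 1), pd 2 f (a, q)
      = ∫ a in Set.Ioo (0:ℝ) 1, (0:ℝ) := setIntegral_congr_fun measurableSet_Ioo inner
    _ = 0 := integral_zero _ _

end Div

section Calc
variable {U : Set (ℝ × ℝ × ℝ)}

/-- Product rule for `pd`. -/
lemma pd_mul {a b : ℝ × ℝ × ℝ → ℝ} {x : ℝ × ℝ × ℝ} (ha : DifferentiableAt ℝ a x)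
    (hb : DifferentiableAt ℝ b x) (j : Fin 3) :
    pd j (fun y => a y * b y) x = pd j a x * b x + a x * pd j b x := by
  unfold pd
  rw [fderiv_fun_mul ha hb]
  simp only [ContinuousLinearMap.add_apply, ContinuousLinearMap.smul_apply, smul_eq_mul]
  ring

/-- Symmetry of second derivatives for `pd`. -/
lemma pd_pd_comm (hU : IsOpen U) {f : ℝ × ℝ × ℝ → ℝ} (hf : ContDiffOn ℝ 2 f U)
    {x : ℝ × ℝ × ℝ} (hx : x ∈ U) (i j : Fin 3) :
    pd j (pd i f) x = pd i (pd j f) x := by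
  have hfd : ContDiffOn ℝ 1 (fderiv ℝ f) U := hf.fderiv_of_isOpen hU (by norm_num)
  have hdd : DifferentiableAt ℝ (fderiv ℝ f) x :=
    (hfd.differentiableOn one_ne_zero).differentiableAt (hU.mem_nhds hx)
  have hev : ∀ᶠ y in nhds x, HasFDerivAt f (fderiv ℝ f y) y := by
    filter_upwards [hU.mem_nhds hx] with y hy
    exact (diffAt_of_C1 hU (hf.of_le one_le_two) hy).hasFDerivAt
  have hsym := second_derivative_symmetric_of_eventually hev hdd.hasFDerivAt
  have hcalc : ∀ k m : Fin 3,
      pd k (pd m f) x = fderiv ℝ (fderiv ℝ f) x (e3 k) (e3 m) := by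
    intro k m
    unfold pd
    rw [fderiv_clm_apply hdd (differentiableAt_const (e3 m))]
    simp
  rw [hcalc j i, hcalc i j, hsym (e3 j) (e3 i)]

/-- The derivative is invariant under a translation preserving the function. -/
lemma fderiv_per {f : ℝ × ℝ × ℝ → ℝ} {v : ℝ × ℝ × ℝ}
    (hp : ∀ x, f (x + v) = f x) {x : ℝ × ℝ × ℝ}
    (hd : DifferentiableAt ℝ f (x + v)) : fderiv ℝ f (x + v) = fderiv ℝ f x := by
  have h1 : HasFDerivAt (fun y => f (y + v)) (fderiv ℝ f (x + v)) x := by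
    have := hd.hasFDerivAt.comp x ((hasFDerivAt_id x).add_const v)
    simpa [Function.comp_def] using this
  have h2 : HasFDerivAt f (fderiv ℝ f (x + v)) x := by
    have hfun : (fun y => f (y + v)) = f := funext hp
    rwa [hfun] at h1
  exact (h2.fderiv).symm ▸ rfl

lemma pd_per2' (hU : IsOpen U) (hUs : strip ⊆ U) {f : ℝ × ℝ × ℝ → ℝ}
    (hf : ContDiffOn ℝ 1 f U) (hp : ∀ x : ℝ × ℝ × ℝ, f (x.1, x.2.1 + 1, x.2.2) = f x)
    {a : ℝ} (ha : a ∈ Set.Icc (0:ℝ) 1) (z : ℝ) (m : Fin 3) :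
    pd m f (a, (1, z)) = pd m f (a, (0, z)) := by
  have hp' : ∀ x : ℝ × ℝ × ℝ, f (x + ((0:ℝ), (1:ℝ), (0:ℝ))) = f x := by
    intro x
    have hx : x + ((0:ℝ), (1:ℝ), (0:ℝ)) = (x.1, x.2.1 + 1, x.2.2) := by
      obtain ⟨x1, x2, x3⟩ := x
      simp [Prod.ext_iff]
    rw [hx]
    exact hp x
  have hd : DifferentiableAt ℝ f ((a, (0, z)) + ((0:ℝ), (1:ℝ), (0:ℝ))) := by
    apply diffAt_of_C1 hU hf
    apply hUs
    exact ⟨by simpa using ha, trivial⟩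
  have := fderiv_per hp' (x := (a, (0, z))) hd
  unfold pd
  rw [show ((a, (1, z)) : ℝ × ℝ × ℝ) = (a, (0, z)) + ((0:ℝ), (1:ℝ), (0:ℝ)) by
    simp [Prod.ext_iff], this]

lemma pd_per3' (hU : IsOpen U) (hUs : strip ⊆ U) {f : ℝ × ℝ × ℝ → ℝ}
    (hf : ContDiffOn ℝ 1 f U) (hp : ∀ x : ℝ × ℝ × ℝ, f (x.1, x.2.1, x.2.2 + 1) = f x)
    {a : ℝ} (ha : a ∈ Set.Icc (0:ℝ) 1) (y : ℝ) (m : Fin 3) :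
    pd m f (a, (y, 1)) = pd m f (a, (y, 0)) := by
  have hp' : ∀ x : ℝ × ℝ × ℝ, f (x + ((0:ℝ), (0:ℝ), (1:ℝ))) = f x := by
    intro x
    have hx : x + ((0:ℝ), (0:ℝ), (1:ℝ)) = (x.1, x.2.1, x.2.2 + 1) := by
      obtain ⟨x1, x2, x3⟩ := x
      simp [Prod.ext_iff]
    rw [hx]
    exact hp x
  have hd : DifferentiableAt ℝ f ((a, (y, 0)) + ((0:ℝ), (0:ℝ), (1:ℝ))) := by
    apply diffAt_of_C1 hU hf
    apply hUs
    exact ⟨by simpa using ha, trivial⟩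
  have := fderiv_per hp' (x := (a, (y, 0))) hd
  unfold pd
  rw [show ((a, (y, 1)) : ℝ × ℝ × ℝ) = (a, (y, 0)) + ((0:ℝ), (0:ℝ), (1:ℝ)) by
    simp [Prod.ext_iff], this]

/-- Tangential derivatives of a function vanishing on a face vanish on that face. -/
lemma pd1_face (hU : IsOpen U) (hUs : strip ⊆ U) {f : ℝ × ℝ × ℝ → ℝ}
    (hf : ContDiffOn ℝ 1 f U) {a : ℝ} (ha : a ∈ Set.Icc (0:ℝ) 1)
    (hzero : ∀ y z : ℝ, f (a, y, z) = 0) (y z : ℝ) : pd 1 f (a, y, z) = 0 := by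
  have hd : HasDerivAt (fun s => f (a, s, z)) (pd 1 f (a, y, z)) y :=
    hasDerivAt_slice1 (diffAt_of_C1 hU hf (hUs ⟨ha, trivial⟩))
  have h0 : HasDerivAt (fun s => f (a, s, z)) 0 y := by
    have : (fun s => f (a, s, z)) = fun _ => (0:ℝ) := funext fun s => hzero s z
    rw [this]
    exact hasDerivAt_const y 0
  exact hd.unique h0

lemma pd2_face (hU : IsOpen U) (hUs : strip ⊆ U) {f : ℝ × ℝ × ℝ → ℝ}
    (hf : ContDiffOn ℝ 1 f U) {a : ℝ} (ha : a ∈ Set.Icc (0:ℝ) 1)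
    (hzero : ∀ y z : ℝ, f (a, y, z) = 0) (y z : ℝ) : pd 2 f (a, y, z) = 0 := by
  have hd : HasDerivAt (fun w => f (a, y, w)) (pd 2 f (a, y, z)) z :=
    hasDerivAt_slice2 (diffAt_of_C1 hU hf (hUs ⟨ha, trivial⟩))
  have h0 : HasDerivAt (fun w => f (a, y, w)) 0 z := by
    have : (fun w => f (a, y, w)) = fun _ => (0:ℝ) := funext fun w => hzero y w
    rw [this]
    exact hasDerivAt_const z 0
  exact hd.unique h0

end Calc

section Pair
variable {U : Set (ℝ × ℝ × ℝ)}

lemma cube_measurable : MeasurableSet cube :=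
  measurableSet_Ioo.prod (measurableSet_Ioo.prod measurableSet_Ioo)

lemma pair_eq (hU : IsOpen U) (hUs : strip ⊆ U) {u : Fin 3 → ℝ × ℝ × ℝ → ℝ}
    (hreg : ∀ i, ContDiffOn ℝ 2 (u i) U)
    (hper2 : ∀ i, ∀ x : ℝ × ℝ × ℝ, u i (x.1, x.2.1 + 1, x.2.2) = u i x)
    (hper3 : ∀ i, ∀ x : ℝ × ℝ × ℝ, u i (x.1, x.2.1, x.2.2 + 1) = u i x)
    (hbc0 : ∀ y z : ℝ, u 0 (0, y, z) = 0)
    (hbc1 : ∀ y z : ℝ, u 0 (1, y, z) = 0) (i j : Fin 3) :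
    ∫ x in cube, pd j (u i) x * pd i (u j) x
      = ∫ x in cube, pd i (u i) x * pd j (u j) x := by
  have hu1 : ∀ k, ContDiffOn ℝ 1 (u k) U := fun k => (hreg k).of_le one_le_two
  have hpc : ∀ k m : Fin 3, ContinuousOn (pd m (u k)) U := fun k m => pd_contOn hU (hu1 k) m
  have hpd1 : ∀ k m : Fin 3, ContDiffOn ℝ 1 (pd m (u k)) U :=
    fun k m => pd_contDiffOn hU (hreg k) m
  -- the two auxiliary vector fields
  have hA : ∀ i j : Fin 3, ContDiffOn ℝ 1 (fun x => u i x * pd i (u j) x) U :=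
    fun i j => (hu1 i).mul (hpd1 j i)
  have hB : ∀ i j : Fin 3, ContDiffOn ℝ 1 (fun x => u i x * pd j (u j) x) U :=
    fun i j => (hu1 i).mul (hpd1 j j)
  have huper2 : ∀ (k : Fin 3) (a z : ℝ), u k (a, (1, z)) = u k (a, (0, z)) := by
    intro k a z
    have := hper2 k (a, (0, z))
    simpa using this
  have huper3 : ∀ (k : Fin 3) (a y : ℝ), u k (a, (y, 1)) = u k (a, (y, 0)) := by
    intro k a y
    have := hper3 k (a, (y, 0))
    simpa using this
  have h0I : (0:ℝ) ∈ Set.Icc (0:ℝ) 1 := by norm_num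
  have h1I : (1:ℝ) ∈ Set.Icc (0:ℝ) 1 := by norm_num
  -- ∫ ∂_j (u_i ∂_i u_j) = 0
  have hzA : ∀ i j : Fin 3, ∫ x in cube, pd j (fun x => u i x * pd i (u j) x) x = 0 := by
    intro i j
    fin_cases j
    · -- j = 0 : boundary terms vanish
      apply intA hU hUs (hA i 0)
      · intro y z
        show u i (0, y, z) * pd i (u 0) (0, y, z) = 0
        fin_cases i
        · show u 0 (0, y, z) * pd 0 (u 0) (0, y, z) = 0
          rw [hbc0 y z, zero_mul]
        · show u 1 (0, y, z) * pd 1 (u 0) (0, y, z) = 0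
          rw [pd1_face hU hUs (hu1 0) h0I hbc0 y z, mul_zero]
        · show u 2 (0, y, z) * pd 2 (u 0) (0, y, z) = 0
          rw [pd2_face hU hUs (hu1 0) h0I hbc0 y z, mul_zero]
      · intro y z
        show u i (1, y, z) * pd i (u 0) (1, y, z) = 0
        fin_cases i
        · show u 0 (1, y, z) * pd 0 (u 0) (1, y, z) = 0
          rw [hbc1 y z, zero_mul]
        · show u 1 (1, y, z) * pd 1 (u 0) (1, y, z) = 0
          rw [pd1_face hU hUs (hu1 0) h1I hbc1 y z, mul_zero]
        · show u 2 (1, y, z) * pd 2 (u 0) (1, y, z) = 0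
          rw [pd2_face hU hUs (hu1 0) h1I hbc1 y z, mul_zero]
    · -- j = 1 : periodicity in x₂
      apply intB hU hUs (hA i 1)
      intro a z ha
      show u i (a, (1, z)) * pd i (u 1) (a, (1, z)) = u i (a, (0, z)) * pd i (u 1) (a, (0, z))
      rw [huper2 i a z, pd_per2' hU hUs (hu1 1) (hper2 1) ha z i]
    · -- j = 2 : periodicity in x₃
      apply intC hU hUs (hA i 2)
      intro a y ha
      show u i (a, (y, 1)) * pd i (u 2) (a, (y, 1)) = u i (a, (y, 0)) * pd i (u 2) (a, (y, 0))
      rw [huper3 i a y, pd_per3' hU hUs (hu1 2) (hper3 2) ha y i]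
  -- ∫ ∂_i (u_i ∂_j u_j) = 0
  have hzB : ∀ i j : Fin 3, ∫ x in cube, pd i (fun x => u i x * pd j (u j) x) x = 0 := by
    intro i j
    fin_cases i
    · apply intA hU hUs (hB 0 j)
      · intro y z
        show u 0 (0, y, z) * pd j (u j) (0, y, z) = 0
        rw [hbc0 y z, zero_mul]
      · intro y z
        show u 0 (1, y, z) * pd j (u j) (1, y, z) = 0
        rw [hbc1 y z, zero_mul]
    · apply intB hU hUs (hB 1 j)
      intro a z ha
      show u 1 (a, (1, z)) * pd j (u j) (a, (1, z)) = u 1 (a, (0, z)) * pd j (u j) (a, (0, z))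
      rw [huper2 1 a z, pd_per2' hU hUs (hu1 j) (hper2 j) ha z j]
    · apply intC hU hUs (hB 2 j)
      intro a y ha
      show u 2 (a, (y, 1)) * pd j (u j) (a, (y, 1)) = u 2 (a, (y, 0)) * pd j (u j) (a, (y, 0))
      rw [huper3 2 a y, pd_per3' hU hUs (hu1 j) (hper3 j) ha y j]
  -- pointwise identity on the cube
  have hpoint : Set.EqOn
      (fun x => pd j (u i) x * pd i (u j) x - pd i (u i) x * pd j (u j) x)
      (fun x => pd j (fun x => u i x * pd i (u j) x) x
        - pd i (fun x => u i x * pd j (u j) x) x) cube := by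
    intro x hx
    have hxU : x ∈ U := hUs (cube_subset_strip hx)
    have hdui : DifferentiableAt ℝ (u i) x := diffAt_of_C1 hU (hu1 i) hxU
    have hdpij : DifferentiableAt ℝ (pd i (u j)) x := diffAt_of_C1 hU (hpd1 j i) hxU
    have hdpjj : DifferentiableAt ℝ (pd j (u j)) x := diffAt_of_C1 hU (hpd1 j j) hxU
    have e1 := pd_mul hdui hdpij j
    have e2 := pd_mul hdui hdpjj i
    have e3' := pd_pd_comm hU (hreg j) hxU i j
    show pd j (u i) x * pd i (u j) x - pd i (u i) x * pd j (u j) x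
      = pd j (fun x => u i x * pd i (u j) x) x - pd i (fun x => u i x * pd j (u j) x) x
    rw [e1, e2, e3']
    ring
  -- integrabilities
  have hI1 : IntegrableOn (fun x => pd j (u i) x * pd i (u j) x) cube :=
    intgOn hUs ((hpc i j).mul (hpc j i))
  have hI2 : IntegrableOn (fun x => pd i (u i) x * pd j (u j) x) cube :=
    intgOn hUs ((hpc i i).mul (hpc j j))
  have hIA : IntegrableOn (fun x => pd j (fun x => u i x * pd i (u j) x) x) cube :=
    intgOn hUs (pd_contOn hU (hA i j) j)
  have hIB : IntegrableOn (fun x => pd i (fun x => u i x * pd j (u j) x) x) cube :=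
    intgOn hUs (pd_contOn hU (hB i j) i)
  have key : ∫ x in cube, (pd j (u i) x * pd i (u j) x - pd i (u i) x * pd j (u j) x) = 0 := by
    calc ∫ x in cube, (pd j (u i) x * pd i (u j) x - pd i (u i) x * pd j (u j) x)
        = ∫ x in cube, (pd j (fun x => u i x * pd i (u j) x) x
            - pd i (fun x => u i x * pd j (u j) x) x) :=
          setIntegral_congr_fun cube_measurable hpoint
      _ = (∫ x in cube, pd j (fun x => u i x * pd i (u j) x) x)
            - ∫ x in cube, pd i (fun x => u i x * pd j (u j) x) x := integral_sub hIA hIB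
      _ = 0 := by rw [hzA i j, hzB i j]; ring
  rw [integral_sub hI1 hI2] at key
  linarith

end Pair

/-- **Symmetric-gradient identity underlying Korn's inequality on the channel.**
Under the tangency and periodicity conditions,
`(1/2) ∫ |∇u + ∇uᵀ|² = ∫ (|∇u|² + (div u)²)` over `(0,1)³`. -/
theorem symmetric_gradient_identity_channel
    (u : Fin 3 → ℝ × ℝ × ℝ → ℝ)
    (U : Set (ℝ × ℝ × ℝ)) (hU : IsOpen U) (hUs : strip ⊆ U)
    (hreg : ∀ i, ContDiffOn ℝ 2 (u i) U)
    (hper2 : ∀ i, ∀ x : ℝ × ℝ × ℝ, u i (x.1, x.2.1 + 1, x.2.2) = u i x)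
    (hper3 : ∀ i, ∀ x : ℝ × ℝ × ℝ, u i (x.1, x.2.1, x.2.2 + 1) = u i x)
    (hbc0 : ∀ y z : ℝ, u 0 (0, y, z) = 0)
    (hbc1 : ∀ y z : ℝ, u 0 (1, y, z) = 0) :
    (1 / 2) * ∫ x in cube, frobSq (jac u x + (jac u x).transpose) =
      ∫ x in cube, (frobSq (jac u x) + (divg u x) ^ 2) := by
  have hu1 : ∀ k, ContDiffOn ℝ 1 (u k) U := fun k => (hreg k).of_le one_le_two
  have hpc : ∀ k m : Fin 3, ContinuousOn (pd m (u k)) U := fun k m => pd_contOn hU (hu1 k) m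
  -- continuity of all integrands
  have hFcont : ContinuousOn (fun x => frobSq (jac u x)) U := by
    show ContinuousOn (fun x => ∑ i : Fin 3, ∑ j : Fin 3, (pd j (u i) x) ^ 2) U
    exact continuousOn_finset_sum _ fun i _ =>
      continuousOn_finset_sum _ fun j _ => (hpc i j).pow 2
  have hGcont : ContinuousOn
      (fun x => ∑ i : Fin 3, ∑ j : Fin 3, pd j (u i) x * pd i (u j) x) U :=
    continuousOn_finset_sum _ fun i _ =>
      continuousOn_finset_sum _ fun j _ => (hpc i j).mul (hpc j i)
  have hHcont : ContinuousOn
      (fun x => ∑ i : Fin 3, ∑ j : Fin 3, pd i (u i) x * pd j (u j) x) U :=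
    continuousOn_finset_sum _ fun i _ =>
      continuousOn_finset_sum _ fun j _ => (hpc i i).mul (hpc j j)
  have hFint : IntegrableOn (fun x => frobSq (jac u x)) cube := intgOn hUs hFcont
  have hGint : IntegrableOn
      (fun x => ∑ i : Fin 3, ∑ j : Fin 3, pd j (u i) x * pd i (u j) x) cube := intgOn hUs hGcont
  have hHint : IntegrableOn
      (fun x => ∑ i : Fin 3, ∑ j : Fin 3, pd i (u i) x * pd j (u j) x) cube := intgOn hUs hHcont
  have hgint : ∀ i j : Fin 3, IntegrableOn (fun x => pd j (u i) x * pd i (u j) x) cube :=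
    fun i j => intgOn hUs ((hpc i j).mul (hpc j i))
  have hhint : ∀ i j : Fin 3, IntegrableOn (fun x => pd i (u i) x * pd j (u j) x) cube :=
    fun i j => intgOn hUs ((hpc i i).mul (hpc j j))
  -- expansion of the symmetric-gradient integrand
  have expand1 : ∫ x in cube, frobSq (jac u x + (jac u x).transpose)
      = 2 * (∫ x in cube, frobSq (jac u x))
        + 2 * ∫ x in cube, (∑ i : Fin 3, ∑ j : Fin 3, pd j (u i) x * pd i (u j) x) := by
    rw [setIntegral_congr_fun cube_measurable
      (g := fun x => 2 * frobSq (jac u x)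
        + 2 * (∑ i : Fin 3, ∑ j : Fin 3, pd j (u i) x * pd i (u j) x))
      (fun x _ => by
        show frobSq (jac u x + (jac u x).transpose) = _
        simp only [frobSq, jac, Matrix.add_apply, Matrix.transpose_apply, Matrix.of_apply,
          Fin.sum_univ_three]
        ring)]
    rw [integral_add (hFint.const_mul 2) (hGint.const_mul 2), integral_const_mul, integral_const_mul]
  have expand2 : ∫ x in cube, (frobSq (jac u x) + (divg u x) ^ 2)
      = (∫ x in cube, frobSq (jac u x))
        + ∫ x in cube, (∑ i : Fin 3, ∑ j : Fin 3, pd i (u i) x * pd j (u j) x) := by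
    rw [setIntegral_congr_fun cube_measurable
      (g := fun x => frobSq (jac u x)
        + ∑ i : Fin 3, ∑ j : Fin 3, pd i (u i) x * pd j (u j) x)
      (fun x _ => by
        show frobSq (jac u x) + (divg u x) ^ 2 = _
        simp only [divg, Fin.sum_univ_three]
        ring)]
    exact integral_add hFint hHint
  -- the integration-by-parts core
  have hGH : ∫ x in cube, (∑ i : Fin 3, ∑ j : Fin 3, pd j (u i) x * pd i (u j) x)
      = ∫ x in cube, (∑ i : Fin 3, ∑ j : Fin 3, pd i (u i) x * pd j (u j) x) := by
    rw [integral_finset_sum _ (fun i _ => integrable_finset_sum _ (fun j _ => hgint i j)),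
      integral_finset_sum _ (fun i _ => integrable_finset_sum _ (fun j _ => hhint i j))]
    refine Finset.sum_congr rfl fun i _ => ?_
    rw [integral_finset_sum _ (fun j _ => hgint i j), integral_finset_sum _ (fun j _ => hhint i j)]
    exact Finset.sum_congr rfl fun j _ =>
      pair_eq hU hUs hreg hper2 hper3 hbc0 hbc1 i j
  rw [expand1, expand2, hGH]
  ring
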